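/- Let G be a group and ρ : ν(G) → G the epimorphism determined by g ↦ g and h^φ ↦ h. Then for every α ∈ ν(G) and all x, y ∈ G, one has [x, y^φ]^α = [x, y^φ]^{ρ(α)} = [x, y^φ]^{ρ(α)^φ} in ν(G). -/

import Mathlib

namespace TensorNu

universe u

/-- The commutator `[x,y] = x⁻¹y⁻¹xy`. -/
def comm {K : Type*} [Group K] (x y : K) : K := x⁻¹ * y⁻¹ * x * y

/-- Conjugation `x^y = y⁻¹xy`. -/
def conj {K : Type*} [Group K] (x y : K) : K := y⁻¹ * x * y

variable (G : Type u) [Group G]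

/-- The defining relators of `ν(G)`, as elements of the free group on `G ⊕ G`,
where `Sum.inl` corresponds to the canonical copy of `G` and `Sum.inr` to the
isomorphic copy `G^φ` (`g ↦ g^φ`).  They comprise the multiplication tables of
`G` and of `G^φ`, together with the relations
`[g₁,g₂^φ]^{g₃} = [g₁^{g₃},(g₂^{g₃})^φ]` and `[g₁,g₂^φ]^{g₃} = [g₁,g₂^φ]^{g₃^φ}`. -/
def nuRels : Set (FreeGroup (G ⊕ G)) :=
  {r | (∃ g h : G, r = FreeGroup.of (Sum.inl g) * FreeGroup.of (Sum.inl h) *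
          (FreeGroup.of (Sum.inl (g * h)))⁻¹)
     ∨ (∃ g h : G, r = FreeGroup.of (Sum.inr g) * FreeGroup.of (Sum.inr h) *
          (FreeGroup.of (Sum.inr (g * h)))⁻¹)
     ∨ (∃ g₁ g₂ g₃ : G, r =
          conj (comm (FreeGroup.of (Sum.inl g₁)) (FreeGroup.of (Sum.inr g₂)))
              (FreeGroup.of (Sum.inl g₃)) *
            (comm (FreeGroup.of (Sum.inl (conj g₁ g₃)))
              (FreeGroup.of (Sum.inr (conj g₂ g₃))))⁻¹)
     ∨ (∃ g₁ g₂ g₃ : G, r =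
          conj (comm (FreeGroup.of (Sum.inl g₁)) (FreeGroup.of (Sum.inr g₂)))
              (FreeGroup.of (Sum.inl g₃)) *
            (conj (comm (FreeGroup.of (Sum.inl g₁)) (FreeGroup.of (Sum.inr g₂)))
              (FreeGroup.of (Sum.inr g₃)))⁻¹)}

/-- The group `ν(G)`. -/
abbrev Nu := PresentedGroup (nuRels G)

/-- The canonical image of `g ∈ G` in `ν(G)`. -/
def ι (g : G) : Nu G := PresentedGroup.of (Sum.inl g)

/-- The canonical image `g^φ` of `g ∈ G` (via the copy `G^φ`) in `ν(G)`. -/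
def ιφ (g : G) : Nu G := PresentedGroup.of (Sum.inr g)

/-- The set `T⊗(G)` of tensors `[a, b^φ]`, `a, b ∈ G`. -/
def tensorSet : Set (Nu G) := {x | ∃ a b : G, x = comm (ι G a) (ιφ G b)}

/-- The image of `G` in `ν(G)` as a subgroup. -/
def GSub : Subgroup (Nu G) := Subgroup.closure (Set.range (ι G))

/-- The image of `G^φ` in `ν(G)` as a subgroup. -/
def GφSub : Subgroup (Nu G) := Subgroup.closure (Set.range (ιφ G))

/-- The non-abelian tensor square `[G, G^φ] ≤ ν(G)`. -/
def tensorSquare : Subgroup (Nu G) := ⁅GSub G, GφSub G⁆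

/-- `[S, x]`: the subgroup generated by the commutators `[s, x]`, `s ∈ S`. -/
def commSub {K : Type*} [Group K] (S : Set K) (x : K) : Subgroup K :=
  Subgroup.closure {c | ∃ s ∈ S, c = comm s x}

end TensorNu

namespace TensorNu

variable {G : Type u} [Group G]

lemma conj_one {K : Type*} [Group K] (a : K) : conj a 1 = a := by
  simp [conj]

lemma conj_conj {K : Type*} [Group K] (a b c : K) :
    conj (conj a b) c = conj a (b * c) := by
  simp [conj, mul_assoc]

lemma rel_mk_eq_one {r : FreeGroup (G ⊕ G)} (hr : r ∈ nuRels G) :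
    (QuotientGroup.mk r : Nu G) = 1 :=
  (QuotientGroup.eq_one_iff r).mpr
    (Subgroup.subset_normalClosure hr)

lemma rel3 (g₁ g₂ g₃ : G) :
    conj (comm (ι G g₁) (ιφ G g₂)) (ι G g₃) =
      comm (ι G (conj g₁ g₃)) (ιφ G (conj g₂ g₃)) := by
  have h := rel_mk_eq_one (G := G)
    (Or.inr (Or.inr (Or.inl ⟨g₁, g₂, g₃, rfl⟩)))
  rw [QuotientGroup.mk_mul, QuotientGroup.mk_inv, mul_inv_eq_one] at h
  simp only [conj, comm, ι, ιφ, PresentedGroup.of, QuotientGroup.mk_mul,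
      QuotientGroup.mk_inv] at h ⊢
  exact h

lemma rel4 (g₁ g₂ g₃ : G) :
    conj (comm (ι G g₁) (ιφ G g₂)) (ι G g₃) =
      conj (comm (ι G g₁) (ιφ G g₂)) (ιφ G g₃) := by
  have h := rel_mk_eq_one (G := G)
    (Or.inr (Or.inr (Or.inr ⟨g₁, g₂, g₃, rfl⟩)))
  rw [QuotientGroup.mk_mul, QuotientGroup.mk_inv, mul_inv_eq_one] at h
  simp only [conj, comm, ι, ιφ, PresentedGroup.of, QuotientGroup.mk_mul,
      QuotientGroup.mk_inv] at h ⊢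
  exact h

lemma conj_comm_eq (ρ : Nu G →* G)
    (hρ₁ : ∀ g : G, ρ (ι G g) = g) (hρ₂ : ∀ h : G, ρ (ιφ G h) = h)
    (α : Nu G) : ∀ x y : G,
    conj (comm (ι G x) (ιφ G y)) α =
      comm (ι G (conj x (ρ α))) (ιφ G (conj y (ρ α))) := by
  induction α using PresentedGroup.induction_on with
  | H z =>
    induction z using FreeGroup.induction_on with
    | C1 =>
      intro x y
      have h1 : ((PresentedGroup.mk (nuRels G) 1 : Nu G)) = 1 := by simp
      rw [h1, conj_one, map_one]
      simp [conj]
    | of s =>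
      intro x y
      cases s with
      | inl g =>
        have h : (PresentedGroup.mk (nuRels G) (FreeGroup.of (Sum.inl g)) : Nu G) = ι G g := rfl
        rw [h, hρ₁, rel3]
      | inr g =>
        have h : (PresentedGroup.mk (nuRels G) (FreeGroup.of (Sum.inr g)) : Nu G) = ιφ G g := rfl
        rw [h, hρ₂, ← rel4, rel3]
    | inv_of s ih =>
      intro x y
      have hinv : (PresentedGroup.mk (nuRels G) (FreeGroup.of s)⁻¹ : Nu G) =
          (PresentedGroup.mk (nuRels G) (FreeGroup.of s) : Nu G)⁻¹ := rfl
      rw [hinv]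
      set a : Nu G := PresentedGroup.mk (nuRels G) (FreeGroup.of s)
      have key := ih (conj x (ρ a)⁻¹) (conj y (ρ a)⁻¹)
      have hx : conj (conj x (ρ a)⁻¹) (ρ a) = x := by simp [conj, mul_assoc]
      have hy : conj (conj y (ρ a)⁻¹) (ρ a) = y := by simp [conj, mul_assoc]
      rw [hx, hy] at key
      rw [← key, conj_conj, map_inv]
      simp [conj]
    | mul u v ihu ihv =>
      intro x y
      have hmul : (PresentedGroup.mk (nuRels G) (u * v) : Nu G) =
          (PresentedGroup.mk (nuRels G) u : Nu G) * PresentedGroup.mk (nuRels G) v := by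
        simp [QuotientGroup.mk_mul]
      rw [hmul, ← conj_conj, ihu, ihv, map_mul, conj_conj, conj_conj]

/-- For every `α ∈ ν(G)` and `x, y ∈ G`:
`[x, y^φ]^α = [x, y^φ]^{ρ(α)} = [x, y^φ]^{ρ(α)^φ}`. -/
theorem conj_tensor_rho (G : Type u) [Group G] (ρ : Nu G →* G)
    (hρ₁ : ∀ g : G, ρ (ι G g) = g) (hρ₂ : ∀ h : G, ρ (ιφ G h) = h)
    (α : Nu G) (x y : G) :
    conj (comm (ι G x) (ιφ G y)) α = conj (comm (ι G x) (ιφ G y)) (ι G (ρ α)) ∧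
    conj (comm (ι G x) (ιφ G y)) α = conj (comm (ι G x) (ιφ G y)) (ιφ G (ρ α)) := by
  have h := conj_comm_eq ρ hρ₁ hρ₂ α x y
  have h3 := rel3 (G := G) x y (ρ α)
  have h4 := rel4 (G := G) x y (ρ α)
  exact ⟨h.trans h3.symm, h.trans (h3.symm.trans h4)⟩

end TensorNu
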